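/- Let F be a field of characteristic zero, let F̄ := AlgebraicClosure F, let m ≥ 2, and let φ ∈ RatFunc F with φ ≠ 0. For a nonzero ρ ∈ RatFunc F̄ and α ∈ F̄, set ord_α(ρ) := (Polynomial.rootMultiplicity α ρ.num : ℤ) − (Polynomial.rootMultiplicity α ρ.denom : ℤ), and let φ̄ ∈ RatFunc F̄ denote the image of φ under coefficient extension along algebraMap F F̄. Then there exist ψ, χ ∈ RatFunc F with ψ ≠ 0 and φ = χ * ψ^m, such that for every α ∈ F̄: if (m : ℤ) ∣ ord_α(φ̄) then ord_α(ψ̄) = ord_α(φ̄) / m, and if ¬ (m : ℤ) ∣ ord_α(φ̄) then ord_α(ψ̄) = 0, where ψ̄ is the image of ψ in RatFunc F̄. -/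

import Mathlib

/-- Order of vanishing of a rational function at a point α: root multiplicity of the
numerator minus root multiplicity of the denominator. -/
noncomputable def ordAt {F : Type*} [Field F] (α : F) (ρ : RatFunc F) : ℤ :=
  (Polynomial.rootMultiplicity α ρ.num : ℤ) - (Polynomial.rootMultiplicity α ρ.denom : ℤ)

/-- Coefficient extension of a rational function along the algebra map to the
algebraic closure. -/
noncomputable def ratExt (F : Type*) [Field F] (ρ : RatFunc F) :
    RatFunc (AlgebraicClosure F) :=
  algebraMap (Polynomial (AlgebraicClosure F)) (RatFunc (AlgebraicClosure F))
      (ρ.num.map (algebraMap F (AlgebraicClosure F))) /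
    algebraMap (Polynomial (AlgebraicClosure F)) (RatFunc (AlgebraicClosure F))
      (ρ.denom.map (algebraMap F (AlgebraicClosure F)))

open Polynomial

section Aux
variable {K : Type*} [Field K]

lemma cross_mul (p q : K[X]) (hq : q ≠ 0) :
    (algebraMap K[X] (RatFunc K) p / algebraMap K[X] (RatFunc K) q).num * q
      = p * (algebraMap K[X] (RatFunc K) p / algebraMap K[X] (RatFunc K) q).denom := by
  set ρ := algebraMap K[X] (RatFunc K) p / algebraMap K[X] (RatFunc K) q with hρ
  have h : algebraMap K[X] (RatFunc K) ρ.num / algebraMap K[X] (RatFunc K) ρ.denom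
      = algebraMap K[X] (RatFunc K) p / algebraMap K[X] (RatFunc K) q := by
    rw [RatFunc.num_div_denom]
  rw [div_eq_div_iff (RatFunc.algebraMap_ne_zero ρ.denom_ne_zero)
    (RatFunc.algebraMap_ne_zero hq)] at h
  apply RatFunc.algebraMap_injective K
  simpa only [map_mul] using h

lemma ordAt_div (α : K) (p q : K[X]) (hp : p ≠ 0) (hq : q ≠ 0) :
    ordAt α (algebraMap K[X] (RatFunc K) p / algebraMap K[X] (RatFunc K) q)
      = (rootMultiplicity α p : ℤ) - rootMultiplicity α q := by
  set ρ := algebraMap K[X] (RatFunc K) p / algebraMap K[X] (RatFunc K) q with hρ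
  have hρ0 : ρ ≠ 0 := div_ne_zero (RatFunc.algebraMap_ne_zero hp) (RatFunc.algebraMap_ne_zero hq)
  have h := cross_mul p q hq
  have hnum : ρ.num ≠ 0 := RatFunc.num_ne_zero hρ0
  have h2 : rootMultiplicity α (ρ.num * q) = rootMultiplicity α (p * ρ.denom) := by rw [h]
  rw [rootMultiplicity_mul (mul_ne_zero hnum hq),
    rootMultiplicity_mul (mul_ne_zero hp ρ.denom_ne_zero)] at h2
  unfold ordAt
  omega

lemma rm_prod (α : K) {ι : Type*} (s : Finset ι) (g : ι → K[X]) (h : ∀ i ∈ s, g i ≠ 0) :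
    rootMultiplicity α (∏ i ∈ s, g i) = ∑ i ∈ s, rootMultiplicity α (g i) := by
  classical
  induction s using Finset.cons_induction with
  | empty =>
    rw [Finset.prod_empty, Finset.sum_empty, ← C_1, rootMultiplicity_C]
  | cons a s ha ih =>
    rw [Finset.prod_cons, Finset.sum_cons,
      rootMultiplicity_mul (mul_ne_zero (h a (Finset.mem_cons_self a s))
        (Finset.prod_ne_zero_iff.2 fun i hi => h i (Finset.mem_cons_of_mem hi))),
      ih fun i hi => h i (Finset.mem_cons_of_mem hi)]

lemma rm_pow (α : K) (p : K[X]) (hp : p ≠ 0) (k : ℕ) :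
    rootMultiplicity α (p ^ k) = k * rootMultiplicity α p := by
  induction k with
  | zero =>
    rw [pow_zero, ← C_1, rootMultiplicity_C, Nat.zero_mul]
  | succ k ih =>
    rw [pow_succ, rootMultiplicity_mul (mul_ne_zero (pow_ne_zero _ hp) hp), ih]
    ring

end Aux

open Polynomial UniqueFactorizationMonoid

section Aux2
variable {F K : Type*} [Field F] [Field K]

lemma rm_map_unit (f : F →+* K) (α : K) {u : F[X]} (hu : IsUnit u) :
    rootMultiplicity α (u.map f) = 0 := by
  obtain ⟨c, -, rfl⟩ := Polynomial.isUnit_iff.1 hu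
  rw [map_C, rootMultiplicity_C]

lemma rm_map_factors [NormalizationMonoid F[X]] [DecidableEq F[X]] (f : F →+* K) (g : F[X]) (hg : g ≠ 0) (α : K) :
    rootMultiplicity α (g.map f)
      = ∑ p ∈ (normalizedFactors g).toFinset,
          (normalizedFactors g).count p * rootMultiplicity α (p.map f) := by
  obtain ⟨u, hu⟩ := prod_normalizedFactors hg
  have hne : ∀ p ∈ (normalizedFactors g).toFinset, p ≠ 0 := fun p hp =>
    (irreducible_of_normalized_factor p (Multiset.mem_toFinset.1 hp)).ne_zero
  have hprod : (normalizedFactors g).prod ≠ 0 := by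
    intro h0
    rw [h0, zero_mul] at hu
    exact hg hu.symm
  have hmap : g.map f = ((normalizedFactors g).prod.map f) * ((u : F[X]).map f) := by
    rw [← Polynomial.map_mul, hu]
  rw [hmap, rootMultiplicity_mul (mul_ne_zero (Polynomial.map_ne_zero hprod)
      (Polynomial.map_ne_zero u.isUnit.ne_zero)),
    rm_map_unit f α u.isUnit, Nat.add_zero, Finset.prod_multiset_count,
    Polynomial.map_prod,
    rm_prod α (normalizedFactors g).toFinset
      (fun i => (i ^ (normalizedFactors g).count i).map f)
      (fun p hp => Polynomial.map_ne_zero (pow_ne_zero _ (hne p hp)))]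
  exact Finset.sum_congr rfl fun p hp => by
    rw [Polynomial.map_pow, rm_pow α _ (Polynomial.map_ne_zero (hne p hp))]

lemma rm_map_irreducible_root [CharZero F] (f : F →+* K) {p : F[X]} (hp : Irreducible p)
    {α : K} (h : (p.map f).IsRoot α) : rootMultiplicity α (p.map f) = 1 := by
  have hsep : (p.map f).Separable := hp.separable.map
  have hle := rootMultiplicity_le_one_of_separable hsep α
  have := (rootMultiplicity_pos (Polynomial.map_ne_zero hp.ne_zero)).2 h
  omega

lemma not_root_both (f : F →+* K) {p q : F[X]} (h : IsCoprime p q) (α : K) :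
    ¬((p.map f).IsRoot α ∧ (q.map f).IsRoot α) := by
  rintro ⟨hp, hq⟩
  obtain ⟨a, b, hab⟩ := h
  have := congrArg (fun r : F[X] => (r.map f).eval α) hab
  simp only [Polynomial.map_add, Polynomial.map_mul, Polynomial.map_one, eval_add, eval_mul,
    eval_one] at this
  rw [hp.eq_zero, hq.eq_zero, mul_zero, mul_zero, add_zero] at this
  exact zero_ne_one this

end Aux2

section Aux3
variable {F K : Type*} [Field F] [Field K]

lemma ratExt_div (F : Type*) [Field F] (p q : Polynomial F) (hq : q ≠ 0) :
    ratExt F (algebraMap (Polynomial F) (RatFunc F) p / algebraMap (Polynomial F) (RatFunc F) q)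
      = algebraMap (Polynomial (AlgebraicClosure F)) (RatFunc (AlgebraicClosure F))
          (p.map (algebraMap F (AlgebraicClosure F))) /
        algebraMap (Polynomial (AlgebraicClosure F)) (RatFunc (AlgebraicClosure F))
          (q.map (algebraMap F (AlgebraicClosure F))) := by
  set f := algebraMap F (AlgebraicClosure F)
  set ρ := algebraMap (Polynomial F) (RatFunc F) p / algebraMap (Polynomial F) (RatFunc F) q
    with hρ
  have hc := cross_mul p q hq
  have hc' : (ρ.num.map f) * (q.map f) = (p.map f) * (ρ.denom.map f) := by
    rw [← Polynomial.map_mul, ← Polynomial.map_mul, hc]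
  show algebraMap _ _ (ρ.num.map f) / algebraMap _ _ (ρ.denom.map f) = _
  rw [div_eq_div_iff (RatFunc.algebraMap_ne_zero (Polynomial.map_ne_zero ρ.denom_ne_zero))
    (RatFunc.algebraMap_ne_zero (Polynomial.map_ne_zero hq)), ← map_mul, ← map_mul, hc']

lemma side_analysis [CharZero F] [NormalizationMonoid (Polynomial F)]
    [DecidableEq (Polynomial F)] (f : F →+* K)
    (g : Polynomial F) (hg : g ≠ 0) (e : Polynomial F → ℕ) (α : K) :
    ((∀ p ∈ (normalizedFactors g).toFinset, ¬(p.map f).IsRoot α)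
      ∧ rootMultiplicity α (g.map f) = 0
      ∧ rootMultiplicity α ((∏ p ∈ (normalizedFactors g).toFinset, p ^ e p).map f) = 0)
    ∨ (∃ p₀ ∈ (normalizedFactors g).toFinset, (p₀.map f).IsRoot α
      ∧ rootMultiplicity α (g.map f) = (normalizedFactors g).count p₀
      ∧ rootMultiplicity α ((∏ p ∈ (normalizedFactors g).toFinset, p ^ e p).map f) = e p₀) := by
  have hirr : ∀ p ∈ (normalizedFactors g).toFinset, Irreducible p := fun p hp =>
    irreducible_of_normalized_factor p (Multiset.mem_toFinset.1 hp)
  have hprod : rootMultiplicity α ((∏ p ∈ (normalizedFactors g).toFinset, p ^ e p).map f)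
      = ∑ p ∈ (normalizedFactors g).toFinset, e p * rootMultiplicity α (p.map f) := by
    rw [Polynomial.map_prod,
      rm_prod α (normalizedFactors g).toFinset (fun p => (p ^ e p).map f)
        (fun p hp => Polynomial.map_ne_zero (pow_ne_zero _ (hirr p hp).ne_zero))]
    exact Finset.sum_congr rfl fun p hp => by
      rw [Polynomial.map_pow, rm_pow α _ (Polynomial.map_ne_zero (hirr p hp).ne_zero)]
  by_cases hex : ∃ p ∈ (normalizedFactors g).toFinset, (p.map f).IsRoot α
  · right
    obtain ⟨p₀, hp₀, hr⟩ := hex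
    have hzero : ∀ p ∈ (normalizedFactors g).toFinset, p ≠ p₀ →
        rootMultiplicity α (p.map f) = 0 := by
      intro p hp hne
      apply rootMultiplicity_eq_zero
      intro hr'
      have hcop : IsCoprime p p₀ := by
        rw [(hirr p hp).coprime_iff_not_dvd]
        intro hdvd
        exact hne (by
          rw [← normalize_normalized_factor p (Multiset.mem_toFinset.1 hp),
            ← normalize_normalized_factor p₀ (Multiset.mem_toFinset.1 hp₀)]
          exact normalize_eq_normalize_iff.2
            ⟨((hirr p hp).associated_of_dvd (hirr p₀ hp₀) hdvd).dvd,
             ((hirr p hp).associated_of_dvd (hirr p₀ hp₀) hdvd).symm.dvd⟩)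
      exact not_root_both f hcop α ⟨hr', hr⟩
    refine ⟨p₀, hp₀, hr, ?_, ?_⟩
    · rw [rm_map_factors f g hg α,
        Finset.sum_eq_single_of_mem p₀ hp₀ (fun p hp hne => by rw [hzero p hp hne, mul_zero]),
        rm_map_irreducible_root f (hirr p₀ hp₀) hr, mul_one]
    · rw [hprod,
        Finset.sum_eq_single_of_mem p₀ hp₀ (fun p hp hne => by rw [hzero p hp hne, mul_zero]),
        rm_map_irreducible_root f (hirr p₀ hp₀) hr, mul_one]
  · left
    push_neg at hex
    have hzero : ∀ p ∈ (normalizedFactors g).toFinset, rootMultiplicity α (p.map f) = 0 :=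
      fun p hp => rootMultiplicity_eq_zero (hex p hp)
    refine ⟨hex, ?_, ?_⟩
    · rw [rm_map_factors f g hg α]
      exact Finset.sum_eq_zero fun p hp => by rw [hzero p hp, mul_zero]
    · rw [hprod]
      exact Finset.sum_eq_zero fun p hp => by rw [hzero p hp, mul_zero]

end Aux3


/-- Theorem 7.2 ('fieldthm') of the paper: for φ ∈ F(x), the rational function
ψ = ∏ (x − α)^{ord_α(φ)/m} (product over α where m ∣ ord_α(φ)) and the cofactor
χ = φ/ψ^m are both defined over F. -/
theorem stmt_12 (F : Type*) [Field F] [CharZero F]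
    (m : ℕ) (hm : 2 ≤ m)
    (φ : RatFunc F) (hφ : φ ≠ 0) :
    ∃ ψ χ : RatFunc F, ψ ≠ 0 ∧ φ = χ * ψ ^ m ∧
      ∀ α : AlgebraicClosure F,
        ((m : ℤ) ∣ ordAt α (ratExt F φ) →
          ordAt α (ratExt F ψ) = ordAt α (ratExt F φ) / m) ∧
        (¬ (m : ℤ) ∣ ordAt α (ratExt F φ) →
          ordAt α (ratExt F ψ) = 0) := by
  classical
  letI : NormalizationMonoid (Polynomial F) := UniqueFactorizationMonoid.normalizationMonoid.toNormalizationMonoid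
  have hm0 : 0 < m := by omega
  set f := algebraMap F (AlgebraicClosure F) with hf
  have hn : φ.num ≠ 0 := RatFunc.num_ne_zero hφ
  have hd : φ.denom ≠ 0 := φ.denom_ne_zero
  set en : Polynomial F → ℕ := fun p =>
    if m ∣ (normalizedFactors φ.num).count p then (normalizedFactors φ.num).count p / m else 0
    with hen
  set ed : Polynomial F → ℕ := fun p =>
    if m ∣ (normalizedFactors φ.denom).count p then (normalizedFactors φ.denom).count p / m
    else 0 with hed
  set A : Polynomial F := ∏ p ∈ (normalizedFactors φ.num).toFinset, p ^ en p with hA_def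
  set B : Polynomial F := ∏ p ∈ (normalizedFactors φ.denom).toFinset, p ^ ed p with hB_def
  have hA : A ≠ 0 := Finset.prod_ne_zero_iff.2 fun p hp =>
    pow_ne_zero _ (irreducible_of_normalized_factor p (Multiset.mem_toFinset.1 hp)).ne_zero
  have hB : B ≠ 0 := Finset.prod_ne_zero_iff.2 fun p hp =>
    pow_ne_zero _ (irreducible_of_normalized_factor p (Multiset.mem_toFinset.1 hp)).ne_zero
  set ψ : RatFunc F :=
    algebraMap (Polynomial F) (RatFunc F) A / algebraMap (Polynomial F) (RatFunc F) B with hψdef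
  have hψ : ψ ≠ 0 := div_ne_zero (RatFunc.algebraMap_ne_zero hA) (RatFunc.algebraMap_ne_zero hB)
  refine ⟨ψ, φ / ψ ^ m, hψ, (div_mul_cancel₀ φ (pow_ne_zero m hψ)).symm, fun α => ?_⟩
  have hordφ : ordAt α (ratExt F φ)
      = (rootMultiplicity α (φ.num.map f) : ℤ) - rootMultiplicity α (φ.denom.map f) := by
    have hh : ratExt F φ
        = algebraMap (Polynomial (AlgebraicClosure F)) (RatFunc (AlgebraicClosure F))
            (φ.num.map f) /
          algebraMap (Polynomial (AlgebraicClosure F)) (RatFunc (AlgebraicClosure F))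
            (φ.denom.map f) := rfl
    rw [hh]
    exact ordAt_div α _ _ (Polynomial.map_ne_zero hn) (Polynomial.map_ne_zero hd)
  have hordψ : ordAt α (ratExt F ψ)
      = (rootMultiplicity α (A.map f) : ℤ) - rootMultiplicity α (B.map f) := by
    rw [hψdef, ratExt_div F A B hB]
    exact ordAt_div α _ _ (Polynomial.map_ne_zero hA) (Polynomial.map_ne_zero hB)
  rcases side_analysis f φ.num hn en α with ⟨hNn, hgn, hAn⟩ | ⟨p₀, hp₀, hr₀, hgn, hAn⟩ <;>
    rcases side_analysis f φ.denom hd ed α with ⟨hNd, hgd, hBd⟩ | ⟨q₀, hq₀, hr₀', hgd, hBd⟩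
  · -- no roots at all
    rw [← hA_def] at hAn
    rw [← hB_def] at hBd
    have h1 : ordAt α (ratExt F φ) = 0 := by rw [hordφ, hgn, hgd]; simp
    have h2 : ordAt α (ratExt F ψ) = 0 := by rw [hordψ, hAn, hBd]; simp
    constructor
    · intro _; rw [h1, h2, Int.zero_ediv]
    · intro _; exact h2
  · -- root only in denom
    rw [← hA_def] at hAn
    have h1 : ordAt α (ratExt F φ) = -((normalizedFactors φ.denom).count q₀ : ℤ) := by
      rw [hordφ, hgn, hgd]; simp
    have h2 : ordAt α (ratExt F ψ) = -(ed q₀ : ℤ) := by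
      rw [hordψ, hAn, hBd]; simp
    constructor
    · intro hdvd
      rw [h1] at hdvd
      have hdvd' : m ∣ (normalizedFactors φ.denom).count q₀ := by
        have h3 := dvd_neg.1 hdvd
        exact_mod_cast h3
      obtain ⟨k, hk⟩ := hdvd'
      have hedk : ed q₀ = k := by
        simp only [hed]
        rw [if_pos ⟨k, hk⟩, hk, Nat.mul_div_cancel_left k hm0]
      rw [h2, h1, hedk, hk]
      push_cast
      rw [show -((m : ℤ) * k) = (m : ℤ) * (-k) by ring,
        Int.mul_ediv_cancel_left _ (by exact_mod_cast hm0.ne')]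
    · intro hnd
      rw [h1] at hnd
      have hnd' : ¬ m ∣ (normalizedFactors φ.denom).count q₀ := fun h =>
        hnd (dvd_neg.2 (Int.natCast_dvd_natCast.2 h))
      rw [h2]
      simp only [hed]
      rw [if_neg hnd']
      simp
  · -- root only in num
    rw [← hB_def] at hBd
    have h1 : ordAt α (ratExt F φ) = ((normalizedFactors φ.num).count p₀ : ℤ) := by
      rw [hordφ, hgn, hgd]; simp
    have h2 : ordAt α (ratExt F ψ) = (en p₀ : ℤ) := by
      rw [hordψ, hAn, hBd]; simp
    constructor
    · intro hdvd
      rw [h1] at hdvd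
      have hdvd' : m ∣ (normalizedFactors φ.num).count p₀ := by exact_mod_cast hdvd
      obtain ⟨k, hk⟩ := hdvd'
      have henk : en p₀ = k := by
        simp only [hen]
        rw [if_pos ⟨k, hk⟩, hk, Nat.mul_div_cancel_left k hm0]
      rw [h2, h1, henk, hk]
      push_cast
      rw [Int.mul_ediv_cancel_left _ (by exact_mod_cast hm0.ne')]
    · intro hnd
      rw [h1] at hnd
      have hnd' : ¬ m ∣ (normalizedFactors φ.num).count p₀ := fun h =>
        hnd (Int.natCast_dvd_natCast.2 h)
      rw [h2]
      simp only [hen]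
      rw [if_neg hnd']
      simp
  · -- roots in both: contradiction
    have hcop : IsCoprime p₀ q₀ :=
      ((RatFunc.isCoprime_num_denom φ).of_isCoprime_of_dvd_left
          (dvd_of_mem_normalizedFactors (Multiset.mem_toFinset.1 hp₀))).of_isCoprime_of_dvd_right
        (dvd_of_mem_normalizedFactors (Multiset.mem_toFinset.1 hq₀))
    exact absurd ⟨hr₀, hr₀'⟩ (not_root_both f hcop α)
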